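/- Let 0 < a < b ≤ 1, 0 < s < 1, and q ≥ 1. Then |A(a^s, b^s) − L(a^s, b^s)| ≤ (s / (2 G(a,b)^{2(s−1)²})) · ((b−a)/(2 L(a,b)))^{1−1/q} · (1/((s²−s+1)q))^{1/q} · [ ( b^{(s²−s+1)q} − L(a^{(s²−s+1)q}, b^{(s²−s+1)q}) )^{1/q} + ( L(a^{(s²−s+1)q}, b^{(s²−s+1)q}) − a^{(s²−s+1)q} )^{1/q} ]. -/

import Mathlib

set_option maxHeartbeats 1000000

open Real MeasureTheory


open Real

/-- Arithmetic mean. -/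
noncomputable def Amean (x y : ℝ) : ℝ := (x + y) / 2

/-- Geometric mean. -/
noncomputable def Gmean (x y : ℝ) : ℝ := Real.sqrt (x * y)

/-- Logarithmic mean. -/
noncomputable def Lmean (x y : ℝ) : ℝ := (y - x) / (Real.log y - Real.log x)

private lemma integral_linexp (r : ℝ) (hr : r ≠ 0) (u v : ℝ) :
    ∫ t in u..v, (t - 1/2) * Real.exp (r * t)
      = Real.exp (r*v) * ((v - 1/2)/r - 1/r^2) - Real.exp (r*u) * ((u - 1/2)/r - 1/r^2) := by
  have h : ∀ t : ℝ, HasDerivAt (fun t => Real.exp (r*t) * ((t - 1/2)/r - 1/r^2))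
      ((t - 1/2) * Real.exp (r * t)) t := by
    intro t
    have h1 : HasDerivAt (fun t : ℝ => r * t) r t := by
      simpa using (hasDerivAt_id t).const_mul r
    have h2 : HasDerivAt (fun t : ℝ => Real.exp (r*t)) (Real.exp (r*t) * r) t :=
      (Real.hasDerivAt_exp _).comp t h1
    have h3 : HasDerivAt (fun t : ℝ => (t - 1/2)/r - 1/r^2) (1/r) t := by
      have := (((hasDerivAt_id t).sub_const (1/2:ℝ)).div_const r).sub_const (1/r^2)
      simpa [one_div] using this
    have := h2.mul h3
    refine this.congr_deriv ?_
    field_simp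
    ring
  exact intervalIntegral.integral_eq_sub_of_hasDerivAt (fun t _ => h t)
    ((Continuous.intervalIntegrable (by continuity) _ _))

private lemma integral_affexp (r w : ℝ) (hr : r ≠ 0) (u v : ℝ) :
    ∫ t in u..v, Real.exp (w + r * t)
      = (Real.exp (w + r*v) - Real.exp (w + r*u))/r := by
  have h : ∀ t : ℝ, HasDerivAt (fun t => Real.exp (w + r*t) / r) (Real.exp (w + r * t)) t := by
    intro t
    have h1 : HasDerivAt (fun t : ℝ => w + r * t) r t := by
      simpa using ((hasDerivAt_id t).const_mul r).const_add w
    have h2 := ((Real.hasDerivAt_exp _).comp t h1).div_const r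
    simpa [mul_div_assoc, mul_div_cancel_right₀, hr] using h2
  rw [intervalIntegral.integral_eq_sub_of_hasDerivAt (fun t _ => h t)
    ((Continuous.intervalIntegrable (by continuity) _ _))]
  ring

private lemma integral_abs_lin : ∫ t in (0:ℝ)..1, |t - 1/2| = 1/4 := by
  have h1 : ∫ t in (0:ℝ)..(1/2), |t - 1/2| = 1/8 := by
    rw [intervalIntegral.integral_congr (g := fun t => 1/2 - t) ?_]
    · rw [intervalIntegral.integral_sub intervalIntegrable_const intervalIntegral.intervalIntegrable_id]
      simp [integral_id]
      norm_num
    · intro t ht; rw [Set.uIcc_of_le (by norm_num)] at ht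
      show |t - 1/2| = 1/2 - t
      rw [abs_of_nonpos (by linarith [ht.2])]; ring
  have h2 : ∫ t in (1/2:ℝ)..1, |t - 1/2| = 1/8 := by
    rw [intervalIntegral.integral_congr (g := fun t => t - 1/2) ?_]
    · rw [intervalIntegral.integral_sub intervalIntegral.intervalIntegrable_id intervalIntegrable_const]
      simp [integral_id]
      norm_num
    · intro t ht; rw [Set.uIcc_of_le (by norm_num)] at ht
      show |t - 1/2| = t - 1/2
      rw [abs_of_nonneg (by linarith [ht.1])]
  have h3 := intervalIntegral.integral_add_adjacent_intervals
    (μ := MeasureTheory.volume) (a := (0:ℝ)) (b := 1/2) (c := 1) (f := fun t => |t - 1/2|)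
    (Continuous.intervalIntegrable (by continuity) _ _)
    (Continuous.intervalIntegrable (by continuity) _ _)
  rw [h1, h2] at h3
  rw [← h3]; norm_num

private lemma holder_step (w r q : ℝ) (hq : 1 ≤ q) :
    ∫ t in (0:ℝ)..1, |t - 1/2| * exp (w + r*t)
      ≤ (1/4) ^ (1 - 1/q) * ((1/2) * ∫ t in (0:ℝ)..1, exp ((w + r*t)*q)) ^ (1/q) := by
  rcases hq.eq_or_lt with h1 | hq
  · -- q = 1
    subst h1
    norm_num
    calc ∫ t in (0:ℝ)..1, |t - 1/2| * exp (w + r*t)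
        ≤ ∫ t in (0:ℝ)..1, (1/2) * exp (w + r*t) := by
          apply intervalIntegral.integral_mono_on zero_le_one
            (Continuous.intervalIntegrable (by continuity) _ _)
            (Continuous.intervalIntegrable (by continuity) _ _)
          intro t ht
          apply mul_le_mul_of_nonneg_right _ (exp_pos _).le
          rw [abs_le]; constructor <;> [linarith [ht.1]; linarith [ht.2]]
      _ = (1/2) * ∫ t in (0:ℝ)..1, exp (w + r*t) := intervalIntegral.integral_const_mul _ _
  · -- 1 < q
    have habsc : Continuous (fun t : ℝ => |t - 1/2|) := (continuous_id.sub continuous_const).abs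
    have hEc : Continuous (fun t : ℝ => exp ((w + r*t)*q)) :=
      (((continuous_const.add (continuous_const.mul continuous_id)).mul continuous_const)).rexp
    set p := Real.conjExponent q with hp
    have hpq : p.HolderConjugate q := (Real.HolderConjugate.conjExponent hq).symm
    have hq0 : 0 < q := by linarith
    have hp0 : 0 < p := hpq.pos
    have hip : 1/p = 1 - 1/q := by
      have := hpq.inv_add_inv_eq_one
      rw [one_div, one_div]; linarith
    have hsum : 1/p + 1/q = 1 := by rw [hip]; ring
    set μ := volume.restrict (Set.Ioc (0:ℝ) 1) with hμ
    haveI : IsFiniteMeasure μ := ⟨by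
      rw [hμ, Measure.restrict_apply_univ, Real.volume_Ioc]
      exact ENNReal.ofReal_lt_top⟩
    set f : ℝ → ℝ := fun t => |t - 1/2| ^ (1/p) with hf
    set g : ℝ → ℝ := fun t => |t - 1/2| ^ (1/q) * exp (w + r*t) with hg
    have hfc : Continuous f := by
      apply Continuous.rpow_const (by continuity)
      exact fun t => Or.inr (by positivity)
    have hgc : Continuous g := by
      apply Continuous.mul
      · apply Continuous.rpow_const (by continuity)
        exact fun t => Or.inr (by positivity)
      · exact (continuous_const.add (continuous_const.mul continuous_id)).rexp
    have hf0 : 0 ≤ᵐ[μ] f := Filter.Eventually.of_forall (fun t => by positivity)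
    have hg0 : 0 ≤ᵐ[μ] g := Filter.Eventually.of_forall (fun t => by positivity)
    have hfm : MemLp f (ENNReal.ofReal p) μ :=
      MemLp.of_bound hfc.aestronglyMeasurable.restrict 1 (by
        filter_upwards [ae_restrict_mem measurableSet_Ioc] with t ht
        rw [Real.norm_eq_abs, abs_of_nonneg (by positivity)]
        apply Real.rpow_le_one (abs_nonneg _) ?_ (by positivity)
        rw [abs_le]; constructor <;> [linarith [ht.1]; linarith [ht.2]])
    have hgm : MemLp g (ENNReal.ofReal q) μ :=
      MemLp.of_bound hgc.aestronglyMeasurable.restrict (exp (|w| + |r|)) (by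
        filter_upwards [ae_restrict_mem measurableSet_Ioc] with t ht
        rw [Real.norm_eq_abs, abs_of_nonneg (by positivity)]
        have h1 : |t - 1/2| ^ (1/q) ≤ 1 := by
          apply Real.rpow_le_one (abs_nonneg _) ?_ (by positivity)
          rw [abs_le]; constructor <;> [linarith [ht.1]; linarith [ht.2]]
        have h2 : exp (w + r*t) ≤ exp (|w| + |r|) := by
          apply exp_le_exp.2
          have h3 : r * t ≤ |r| := by
            rcases le_or_gt 0 r with h | h
            · calc r * t ≤ r * 1 := by nlinarith [ht.2, ht.1.le]
                _ = r := mul_one r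
                _ ≤ |r| := le_abs_self r
            · calc r * t ≤ 0 := by nlinarith [ht.1.le]
                _ ≤ |r| := abs_nonneg r
          linarith [le_abs_self w]
        calc |t - 1/2| ^ (1/q) * exp (w + r*t) ≤ 1 * exp (|w| + |r|) :=
          mul_le_mul h1 h2 (exp_pos _).le zero_le_one
          _ = _ := one_mul _)
    have holder := MeasureTheory.integral_mul_le_Lp_mul_Lq_of_nonneg hpq hf0 hg0 hfm hgm
    have e1 : ∫ t in (0:ℝ)..1, |t - 1/2| * exp (w + r*t) = ∫ t, f t * g t ∂μ := by
      rw [intervalIntegral.integral_of_le zero_le_one]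
      apply setIntegral_congr_fun measurableSet_Ioc
      intro t _
      show |t - 1/2| * exp (w + r*t) = |t - 1/2| ^ (1/p) * (|t - 1/2| ^ (1/q) * exp (w + r*t))
      rw [← mul_assoc, ← Real.rpow_add' (abs_nonneg _) (by rw [hsum]; norm_num), hsum,
        Real.rpow_one]
    have e2 : ∫ t, f t ^ p ∂μ = 1/4 := by
      have e2' : ∀ t : ℝ, f t ^ p = |t - 1/2| := by
        intro t
        show (|t - 1/2| ^ (1/p)) ^ p = |t - 1/2|
        rw [← Real.rpow_mul (abs_nonneg _), one_div_mul_cancel hp0.ne', Real.rpow_one]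
      calc ∫ t, f t ^ p ∂μ = ∫ t, |t - 1/2| ∂μ :=
            integral_congr_ae (Filter.Eventually.of_forall e2')
        _ = ∫ t in (0:ℝ)..1, |t - 1/2| := (intervalIntegral.integral_of_le zero_le_one).symm
        _ = 1/4 := integral_abs_lin
    have e3 : ∫ t, g t ^ q ∂μ ≤ (1/2) * ∫ t in (0:ℝ)..1, exp ((w + r*t)*q) := by
      have e3' : ∀ t : ℝ, g t ^ q = |t - 1/2| * exp ((w + r*t)*q) := by
        intro t
        show (|t - 1/2| ^ (1/q) * exp (w + r*t)) ^ q = |t - 1/2| * exp ((w + r*t)*q)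
        rw [Real.mul_rpow (by positivity) (exp_pos _).le, ← Real.rpow_mul (abs_nonneg _),
          one_div_mul_cancel hq0.ne', Real.rpow_one, Real.exp_mul]
      rw [integral_congr_ae (Filter.Eventually.of_forall e3')]
      calc ∫ t, |t - 1/2| * exp ((w + r*t)*q) ∂μ
          ≤ ∫ t, (1/2) * exp ((w + r*t)*q) ∂μ := by
            apply setIntegral_mono_on
            · exact (habsc.mul hEc).integrableOn_Ioc
            · exact (continuous_const.mul hEc).integrableOn_Ioc
            · exact measurableSet_Ioc
            · intro t ht
              apply mul_le_mul_of_nonneg_right _ (exp_pos _).le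
              rw [abs_le]; constructor <;> [linarith [ht.1]; linarith [ht.2]]
        _ = (1/2) * ∫ t in (0:ℝ)..1, exp ((w + r*t)*q) := by
            rw [integral_const_mul, intervalIntegral.integral_of_le zero_le_one]
    have hnn : (0:ℝ) ≤ ∫ t, g t ^ q ∂μ := integral_nonneg (fun t => by positivity)
    calc ∫ t in (0:ℝ)..1, |t - 1/2| * exp (w + r*t) = ∫ t, f t * g t ∂μ := e1
      _ ≤ (∫ t, f t ^ p ∂μ) ^ (1/p) * (∫ t, g t ^ q ∂μ) ^ (1/q) := holder
      _ ≤ (1/4) ^ (1 - 1/q) * ((1/2) * ∫ t in (0:ℝ)..1, exp ((w + r*t)*q)) ^ (1/q) := by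
          rw [e2, hip]
          exact mul_le_mul_of_nonneg_left (Real.rpow_le_rpow hnn e3 (by positivity))
            (by positivity)

private lemma lmean_bounds {u v : ℝ} (hu : 0 < u) (huv : u < v) :
    u ≤ (v - u) / (log v - log u) ∧ (v - u) / (log v - log u) ≤ v := by
  have hv : 0 < v := hu.trans huv
  have hd : 0 < log v - log u := sub_pos.2 (log_lt_log hu huv)
  have t1 := Real.log_le_sub_one_of_pos (x := v / u) (by positivity)
  rw [log_div hv.ne' hu.ne'] at t1
  have t2 := Real.log_le_sub_one_of_pos (x := u / v) (by positivity)
  rw [log_div hu.ne' hv.ne'] at t2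
  have e1 : u * (v/u - 1) = v - u := by field_simp
  have e2 : v * (u/v - 1) = u - v := by field_simp
  have h1 : u * (log v - log u) ≤ v - u := by
    nlinarith [mul_le_mul_of_nonneg_left t1 hu.le]
  have h2 : v - u ≤ v * (log v - log u) := by
    nlinarith [mul_le_mul_of_nonneg_left t2 hv.le]
  exact ⟨(le_div_iff₀ hd).2 h1, (div_le_iff₀ hd).2 h2⟩

private lemma rpow_subadd {x y e : ℝ} (hx : 0 ≤ x) (hy : 0 ≤ y) (he0 : 0 ≤ e) (he1 : e ≤ 1) :
    (x + y) ^ e ≤ x ^ e + y ^ e := by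
  have h := NNReal.rpow_add_le_add_rpow x.toNNReal y.toNNReal he0 he1
  rw [← Real.toNNReal_add hx hy] at h
  have h2 := NNReal.coe_le_coe.2 h
  simpa [NNReal.coe_rpow, Real.coe_toNNReal x hx, Real.coe_toNNReal y hy,
    Real.coe_toNNReal _ (add_nonneg hx hy)] using h2

theorem stmt_18 (a b s q : ℝ) (ha : 0 < a) (hab : a < b) (hb : b ≤ 1)
    (hs0 : 0 < s) (hs1 : s < 1) (hq : 1 ≤ q) :
    |Amean (a ^ s) (b ^ s) - Lmean (a ^ s) (b ^ s)| ≤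
      (s / (2 * Gmean a b ^ (2 * (s - 1) ^ 2))) *
        ((b - a) / (2 * Lmean a b)) ^ (1 - 1 / q) *
        (1 / ((s ^ 2 - s + 1) * q)) ^ (1 / q) *
        ((b ^ ((s ^ 2 - s + 1) * q)
            - Lmean (a ^ ((s ^ 2 - s + 1) * q)) (b ^ ((s ^ 2 - s + 1) * q))) ^ (1 / q)
          + (Lmean (a ^ ((s ^ 2 - s + 1) * q)) (b ^ ((s ^ 2 - s + 1) * q))
            - a ^ ((s ^ 2 - s + 1) * q)) ^ (1 / q)) := by
  have hb0 : 0 < b := ha.trans hab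
  have hq0 : 0 < q := lt_of_lt_of_le one_pos hq
  have ht0 : 0 < 1/q := by positivity
  have ht1 : 1/q ≤ 1 := by rw [div_le_one hq0]; exact hq
  set La := log a with hLa
  set Lb := log b with hLb
  have hLab : La < Lb := log_lt_log ha hab
  have hLbneg : Lb ≤ 0 := log_nonpos hb0.le hb
  have hℓ : 0 < Lb - La := sub_pos.2 hLab
  have hcpos : 0 < s^2 - s + 1 := by nlinarith
  set m := (s^2 - s + 1) * q with hm
  have hm0 : 0 < m := mul_pos hcpos hq0
  have hra : ∀ x : ℝ, a ^ x = exp (La * x) := fun x => rpow_def_of_pos ha x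
  have hrb : ∀ x : ℝ, b ^ x = exp (Lb * x) := fun x => rpow_def_of_pos hb0 x
  have hr : 0 < s * (Lb - La) := mul_pos hs0 hℓ
  set D := exp (Lb*m) - exp (La*m) with hD
  have hDpos : 0 < D := sub_pos.2 (exp_lt_exp.2 (by nlinarith))
  -- component rewrites
  have hA : Amean (a^s) (b^s) = (exp (La*s) + exp (Lb*s))/2 := by
    rw [Amean, hra, hrb]
  have hLs : Lmean (a^s) (b^s) = (exp (Lb*s) - exp (La*s)) / (s*(Lb-La)) := by
    rw [Lmean, hra, hrb, log_exp, log_exp]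
    congr 1; ring
  have hΛ : Lmean (a^m) (b^m) = D / (m*(Lb-La)) := by
    rw [Lmean, hra, hrb, log_exp, log_exp, hD]
    congr 1; ring
  have hG : Gmean a b ^ (2*(s-1)^2) = exp ((s-1)^2 * (La + Lb)) := by
    rw [Gmean, rpow_def_of_pos (sqrt_pos.2 (mul_pos ha hb0)), log_sqrt (mul_pos ha hb0).le,
      log_mul ha.ne' hb0.ne', ← hLa, ← hLb]
    congr 1; ring
  have hLM : (b - a)/(2 * Lmean a b) = (Lb - La)/2 := by
    rw [Lmean, ← hLa, ← hLb]
    have hba : b - a ≠ 0 := sub_ne_zero.2 hab.ne'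
    field_simp
  -- step 1: trapezoid identity and abs bound
  have hc1 : Continuous (fun t:ℝ => |t-1/2| * exp (La*s + (s*(Lb-La))*t)) :=
    ((continuous_id.sub continuous_const).abs).mul
      ((continuous_const.add (continuous_const.mul continuous_id)).rexp)
  have hc2 : Continuous (fun t:ℝ => |t-1/2| * exp (La*(s^2-s+1) + ((s^2-s+1)*(Lb-La))*t)) :=
    ((continuous_id.sub continuous_const).abs).mul
      ((continuous_const.add (continuous_const.mul continuous_id)).rexp)
  have step1 : |Amean (a^s) (b^s) - Lmean (a^s) (b^s)|
      ≤ (s*(Lb-La)) * ∫ t in (0:ℝ)..1, |t-1/2| * exp (La*s + (s*(Lb-La))*t) := by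
    have hI : ∫ t in (0:ℝ)..1, (t-1/2) * exp (La*s + (s*(Lb-La))*t)
        = exp (La*s) * (exp ((s*(Lb-La))*1) * ((1-1/2)/(s*(Lb-La)) - 1/(s*(Lb-La))^2)
            - exp ((s*(Lb-La))*0) * ((0-1/2)/(s*(Lb-La)) - 1/(s*(Lb-La))^2)) := by
      rw [intervalIntegral.integral_congr
          (g := fun t => exp (La*s) * ((t-1/2) * exp ((s*(Lb-La))*t)))
          (fun t _ => by show _ = _; rw [exp_add]; ring),
        intervalIntegral.integral_const_mul, integral_linexp _ hr.ne']
    have hid : Amean (a^s) (b^s) - Lmean (a^s) (b^s)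
        = (s*(Lb-La)) * ∫ t in (0:ℝ)..1, (t-1/2) * exp (La*s + (s*(Lb-La))*t) := by
      rw [hA, hLs, hI]
      have hF : exp (Lb*s) = exp (La*s) * exp (s*(Lb-La)) := by
        rw [← exp_add]; congr 1; ring
      rw [mul_one, mul_zero, exp_zero, hF]
      field_simp
      ring
    rw [hid, abs_mul, abs_of_pos hr]
    apply mul_le_mul_of_nonneg_left _ hr.le
    calc |∫ t in (0:ℝ)..1, (t-1/2) * exp (La*s + (s*(Lb-La))*t)|
        = ‖∫ t in (0:ℝ)..1, (t-1/2) * exp (La*s + (s*(Lb-La))*t)‖ :=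
          (Real.norm_eq_abs _).symm
      _ ≤ ∫ t in (0:ℝ)..1, ‖(t-1/2) * exp (La*s + (s*(Lb-La))*t)‖ :=
          intervalIntegral.norm_integral_le_integral_norm zero_le_one
      _ = ∫ t in (0:ℝ)..1, |t-1/2| * exp (La*s + (s*(Lb-La))*t) := by
          apply intervalIntegral.integral_congr
          intro t _
          show ‖_‖ = _
          rw [norm_mul, Real.norm_eq_abs, Real.norm_eq_abs, abs_exp]
  -- step 2: pointwise bound via geometric mean
  have step2 : ∫ t in (0:ℝ)..1, |t-1/2| * exp (La*s + (s*(Lb-La))*t)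
      ≤ exp (-((s-1)^2*(La+Lb)))
        * ∫ t in (0:ℝ)..1, |t-1/2| * exp (La*(s^2-s+1) + ((s^2-s+1)*(Lb-La))*t) := by
    rw [← intervalIntegral.integral_const_mul]
    apply intervalIntegral.integral_mono_on zero_le_one
      (hc1.intervalIntegrable _ _) ((continuous_const.mul hc2).intervalIntegrable _ _)
    intro t ht
    have key : 0 ≤ (s-1)^2 * ((Lb-La)*t - Lb) :=
      mul_nonneg (sq_nonneg _) (by nlinarith [ht.1, ht.2])
    calc |t-1/2| * exp (La*s + (s*(Lb-La))*t)
        ≤ |t-1/2| * (exp (-((s-1)^2*(La+Lb)))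
            * exp (La*(s^2-s+1) + ((s^2-s+1)*(Lb-La))*t)) := by
          apply mul_le_mul_of_nonneg_left _ (abs_nonneg _)
          rw [← exp_add]
          apply exp_le_exp.2
          nlinarith [key]
      _ = exp (-((s-1)^2*(La+Lb)))
            * (|t-1/2| * exp (La*(s^2-s+1) + ((s^2-s+1)*(Lb-La))*t)) := by ring
  -- step 4: the value of the q-integral
  have step4 : ∫ t in (0:ℝ)..1, exp ((La*(s^2-s+1) + ((s^2-s+1)*(Lb-La))*t)*q)
      = D/(m*(Lb-La)) := by
    rw [intervalIntegral.integral_congr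
        (g := fun t => exp (La*m + (m*(Lb-La))*t))
        (fun t _ => by show _ = _; congr 1; rw [hm]; ring)]
    rw [integral_affexp (m*(Lb-La)) (La*m) (by positivity : (0:ℝ) < m*(Lb-La)).ne' 0 1]
    rw [mul_one, mul_zero, add_zero, show La*m + m*(Lb-La) = Lb*m from by ring, hD]
  have step34 : ∫ t in (0:ℝ)..1, |t-1/2| * exp (La*(s^2-s+1) + ((s^2-s+1)*(Lb-La))*t)
      ≤ (1/4)^(1-1/q) * ((1/2) * (D/(m*(Lb-La))))^(1/q) := by
    have h := holder_step (La*(s^2-s+1)) ((s^2-s+1)*(Lb-La)) q hq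
    rwa [step4] at h
  -- bounds on the logarithmic mean
  have hXY := lmean_bounds (u := exp (La*m)) (v := exp (Lb*m)) (exp_pos _)
    (exp_lt_exp.2 (by nlinarith))
  rw [log_exp, log_exp, show Lb*m - La*m = m*(Lb-La) from by ring] at hXY
  have hx : 0 ≤ exp (Lb*m) - D/(m*(Lb-La)) := by rw [hD]; exact sub_nonneg.2 hXY.2
  have hy : 0 ≤ D/(m*(Lb-La)) - exp (La*m) := by rw [hD]; exact sub_nonneg.2 hXY.1
  have hsub : D^(1/q) ≤ (exp (Lb*m) - D/(m*(Lb-La)))^(1/q)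
      + (D/(m*(Lb-La)) - exp (La*m))^(1/q) := by
    have h := rpow_subadd hx hy ht0.le ht1
    rwa [show (exp (Lb*m) - D/(m*(Lb-La))) + (D/(m*(Lb-La)) - exp (La*m)) = D
      from by rw [hD]; ring] at h
  -- the constant identity
  have hcore : (s*(Lb-La)) * (exp (-((s-1)^2*(La+Lb)))
        * ((1/4)^(1-1/q) * ((1/2) * (D/(m*(Lb-La))))^(1/q)))
      = (s * exp (-((s-1)^2*(La+Lb))) / 2) * ((Lb-La)/2)^(1-1/q) * (1/m)^(1/q) * D^(1/q) := by
    have core : (Lb-La) * ((1/4:ℝ)^(1-1/q) * ((1/2) * (D/(m*(Lb-La))))^(1/q))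
        = (1/2) * (((Lb-La)/2)^(1-1/q) * ((1/m:ℝ)^(1/q) * D^(1/q))) := by
      have hL1 : (0:ℝ) < (Lb-La) * ((1/4:ℝ)^(1-1/q) * ((1/2) * (D/(m*(Lb-La))))^(1/q)) := by
        positivity
      have hR1 : (0:ℝ) < (1/2:ℝ) * (((Lb-La)/2)^(1-1/q) * ((1/m:ℝ)^(1/q) * D^(1/q))) := by
        positivity
      rw [← exp_log hL1, ← exp_log hR1]
      congr 1
      rw [log_mul hℓ.ne'
            (by positivity : (0:ℝ) < (1/4:ℝ)^(1-1/q) * ((1/2) * (D/(m*(Lb-La))))^(1/q)).ne',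
          log_mul (by positivity : (0:ℝ) < (1/4:ℝ)^(1-1/q)).ne'
            (by positivity : (0:ℝ) < ((1/2) * (D/(m*(Lb-La))))^(1/q)).ne',
          log_mul (by norm_num : ((1:ℝ)/2) ≠ 0)
            (by positivity : (0:ℝ) < ((Lb-La)/2)^(1-1/q) * ((1/m:ℝ)^(1/q) * D^(1/q))).ne',
          log_mul (by positivity : (0:ℝ) < ((Lb-La)/2)^(1-1/q)).ne'
            (by positivity : (0:ℝ) < (1/m:ℝ)^(1/q) * D^(1/q)).ne',
          log_mul (by positivity : (0:ℝ) < (1/m:ℝ)^(1/q)).ne'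
            (by positivity : (0:ℝ) < D^(1/q)).ne',
          log_rpow (by norm_num : (0:ℝ) < (1/4:ℝ)),
          log_rpow (by positivity : (0:ℝ) < (1/2) * (D/(m*(Lb-La)))),
          log_rpow (by positivity : (0:ℝ) < (Lb-La)/2),
          log_rpow (by positivity : (0:ℝ) < (1/m:ℝ)),
          log_rpow hDpos,
          log_mul (by norm_num : ((1:ℝ)/2) ≠ 0) (by positivity : (0:ℝ) < D/(m*(Lb-La))).ne',
          log_div hDpos.ne' (by positivity : (0:ℝ) < m*(Lb-La)).ne',
          log_mul hm0.ne' hℓ.ne',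
          log_div hℓ.ne' (two_ne_zero),
          show ((1:ℝ)/4) = 4⁻¹ from one_div 4, log_inv,
          show ((1:ℝ)/2) = 2⁻¹ from one_div 2, log_inv,
          show ((1:ℝ)/m) = m⁻¹ from one_div m, log_inv,
          show (4:ℝ) = 2^2 from by norm_num, log_pow]
      push_cast
      ring
    linear_combination (s * exp (-((s-1)^2*(La+Lb)))) * core
  -- rewriting the right-hand side of the goal
  have hRHS : (s / (2 * Gmean a b ^ (2*(s-1)^2))) * ((b-a)/(2*Lmean a b))^(1-1/q)
        * (1/m)^(1/q)
        * ((b^m - Lmean (a^m) (b^m))^(1/q) + (Lmean (a^m) (b^m) - a^m)^(1/q))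
      = (s * exp (-((s-1)^2*(La+Lb))) / 2) * ((Lb-La)/2)^(1-1/q) * (1/m)^(1/q)
        * ((exp (Lb*m) - D/(m*(Lb-La)))^(1/q) + (D/(m*(Lb-La)) - exp (La*m))^(1/q)) := by
    rw [hG, hLM, hΛ, hra, hrb, exp_neg]
    ring
  calc |Amean (a^s) (b^s) - Lmean (a^s) (b^s)|
      ≤ (s*(Lb-La)) * ∫ t in (0:ℝ)..1, |t-1/2| * exp (La*s + (s*(Lb-La))*t) := step1
    _ ≤ (s*(Lb-La)) * (exp (-((s-1)^2*(La+Lb)))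
          * ∫ t in (0:ℝ)..1, |t-1/2| * exp (La*(s^2-s+1) + ((s^2-s+1)*(Lb-La))*t)) :=
        mul_le_mul_of_nonneg_left step2 hr.le
    _ ≤ (s*(Lb-La)) * (exp (-((s-1)^2*(La+Lb)))
          * ((1/4)^(1-1/q) * ((1/2) * (D/(m*(Lb-La))))^(1/q))) :=
        mul_le_mul_of_nonneg_left (mul_le_mul_of_nonneg_left step34 (exp_pos _).le) hr.le
    _ = (s * exp (-((s-1)^2*(La+Lb))) / 2) * ((Lb-La)/2)^(1-1/q) * (1/m)^(1/q) * D^(1/q) :=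
        hcore
    _ ≤ (s * exp (-((s-1)^2*(La+Lb))) / 2) * ((Lb-La)/2)^(1-1/q) * (1/m)^(1/q)
          * ((exp (Lb*m) - D/(m*(Lb-La)))^(1/q) + (D/(m*(Lb-La)) - exp (La*m))^(1/q)) :=
        mul_le_mul_of_nonneg_left hsub (by positivity)
    _ = _ := hRHS.symm
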